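/- Let σ(x) = 1/(1+exp(−x)) be the logistic function and for real numbers a, b set p_a = σ(a), p_b = σ(b). Then D_KL(p_a‖p_b) + D_KL(p_b‖p_a) ≤ max(p_a, p_b) · (a − b)². -/

import Mathlib

/-- The logistic (sigmoid) function `σ(x) = 1/(1+exp(−x))`. -/
noncomputable def logistic (x : ℝ) : ℝ := 1 / (1 + Real.exp (-x))

/-- Kullback–Leibler divergence between Bernoulli(p) and Bernoulli(q). -/
noncomputable def klBernoulli (p q : ℝ) : ℝ :=
  p * Real.log (p / q) + (1 - p) * Real.log ((1 - p) / (1 - q))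

lemma logistic_pos (x : ℝ) : 0 < logistic x := by
  unfold logistic
  positivity

lemma logistic_lt_one (x : ℝ) : logistic x < 1 := by
  unfold logistic
  rw [div_lt_one (by positivity)]
  linarith [Real.exp_pos (-x)]

lemma logistic_mono {x y : ℝ} (h : x ≤ y) : logistic x ≤ logistic y := by
  unfold logistic
  apply one_div_le_one_div_of_le (by positivity)
  have := Real.exp_le_exp.2 (neg_le_neg h)
  linarith

lemma logit_logistic (x : ℝ) :
    Real.log (logistic x) - Real.log (1 - logistic x) = x := by
  have h1 : 1 - logistic x = Real.exp (-x) * logistic x := by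
    unfold logistic
    have h : (0:ℝ) < 1 + Real.exp (-x) := by positivity
    field_simp
    ring
  rw [h1, Real.log_mul (Real.exp_ne_zero _) (ne_of_gt (logistic_pos x)),
    Real.log_exp]
  ring

lemma logistic_diff_le {a b : ℝ} (h : b ≤ a) :
    logistic a - logistic b ≤ logistic a * (a - b) := by
  have h1 : logistic a * Real.exp (b - a) ≤ logistic b := by
    unfold logistic
    rw [div_mul_eq_mul_div, div_le_div_iff₀ (by positivity) (by positivity)]
    have he : Real.exp (b - a) ≤ 1 := Real.exp_le_one_iff.2 (by linarith)
    have h2 : Real.exp (b - a) * Real.exp (-b) = Real.exp (-a) := by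
      rw [← Real.exp_add]; ring_nf
    nlinarith [Real.exp_pos (-b), Real.exp_pos (-a)]
  have h2 : 1 - Real.exp (b - a) ≤ a - b := by
    have := Real.add_one_le_exp (b - a)
    linarith
  have h3 : logistic a * (1 - Real.exp (b - a)) ≤ logistic a * (a - b) :=
    mul_le_mul_of_nonneg_left h2 (le_of_lt (logistic_pos a))
  nlinarith

lemma symm_kl_eq (p q : ℝ) (hp0 : 0 < p) (hp1 : p < 1) (hq0 : 0 < q) (hq1 : q < 1) :
    klBernoulli p q + klBernoulli q p
      = (p - q) * ((Real.log p - Real.log (1 - p)) - (Real.log q - Real.log (1 - q))) := by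
  unfold klBernoulli
  rw [Real.log_div (ne_of_gt hp0) (ne_of_gt hq0),
    Real.log_div (ne_of_gt hq0) (ne_of_gt hp0),
    Real.log_div (by linarith : (1:ℝ) - p ≠ 0) (by linarith : (1:ℝ) - q ≠ 0),
    Real.log_div (by linarith : (1:ℝ) - q ≠ 0) (by linarith : (1:ℝ) - p ≠ 0)]
  ring

/-- The symmetrized KL divergence between Bernoulli(σ(a)) and Bernoulli(σ(b))
is at most `max(σ(a), σ(b)) · (a − b)²`. -/
theorem symm_kl_bernoulli_logistic_le (a b : ℝ) :
    klBernoulli (logistic a) (logistic b) + klBernoulli (logistic b) (logistic a)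
      ≤ max (logistic a) (logistic b) * (a - b) ^ 2 := by
  rw [symm_kl_eq _ _ (logistic_pos a) (logistic_lt_one a) (logistic_pos b) (logistic_lt_one b),
    logit_logistic, logit_logistic]
  rcases le_total b a with h | h
  · rw [max_eq_left (logistic_mono h)]
    have h1 := logistic_diff_le h
    nlinarith
  · rw [max_eq_right (logistic_mono h)]
    have h1 := logistic_diff_le h
    nlinarith
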